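/- arXiv:2409.18925 — 3 statements merged into one kernel-verified Lean document; each statement's English description precedes it below -/
import Mathlib

section
/- Let f : U → X be a G-equivariant monomorphism of k-schemes. Then the induced morphism Fix_G(f) : Fix_G(U) → Fix_G(X) is a monomorphism, and the commutative square whose horizontal arrows are Fix_G(f) and f and whose vertical arrows are the canonical projections Fix_G(U) → U and Fix_G(X) → X is cartesian, i.e. Fix_G(U) is canonically isomorphic to the fiber product Fix_G(X) ×_X U. -/
open CategoryTheory CategoryTheory.Limits AlgebraicGeometry

noncomputable section
namespace Paper
universe u
variable (k : CommRingCat.{u})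
variable {G X U : Scheme.{u}}

/-- The morphism `(m, pr₂) : G ×ₖ X ⟶ X ×ₖ X`. -/
def actionPair (sG : G ⟶ Spec k) (sX : X ⟶ Spec k) (m : pullback sG sX ⟶ X)
    (hm : m ≫ sX = pullback.snd sG sX ≫ sX) : pullback sG sX ⟶ pullback sX sX :=
  pullback.lift m (pullback.snd sG sX) hm

/-- The fixed-point scheme `Fix_G(X)`. -/
def Fix (sG : G ⟶ Spec k) (sX : X ⟶ Spec k) (m : pullback sG sX ⟶ X)
    (hm : m ≫ sX = pullback.snd sG sX ≫ sX) : Scheme :=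
  pullback (actionPair k sG sX m hm) (pullback.diagonal sX)

/-- The canonical projection `Fix_G(X) ⟶ G ×ₖ X`. -/
def fixToProd (sG : G ⟶ Spec k) (sX : X ⟶ Spec k) (m : pullback sG sX ⟶ X)
    (hm : m ≫ sX = pullback.snd sG sX ≫ sX) :
    Fix k sG sX m hm ⟶ pullback sG sX :=
  pullback.fst (actionPair k sG sX m hm) (pullback.diagonal sX)

/-- The canonical projection `Fix_G(X) ⟶ X`. -/
def fixToBase (sG : G ⟶ Spec k) (sX : X ⟶ Spec k) (m : pullback sG sX ⟶ X)
    (hm : m ≫ sX = pullback.snd sG sX ≫ sX) :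
    Fix k sG sX m hm ⟶ X :=
  pullback.snd (actionPair k sG sX m hm) (pullback.diagonal sX)

/-- `id_G ×ₖ f : G ×ₖ U ⟶ G ×ₖ X`. -/
def prodMap (sG : G ⟶ Spec k) (sU : U ⟶ Spec k) (sX : X ⟶ Spec k)
    (f : U ⟶ X) (hf : f ≫ sX = sU) : pullback sG sU ⟶ pullback sG sX :=
  pullback.map sG sU sG sX (𝟙 G) f (𝟙 (Spec k)) (by simp) (by simp [hf])

theorem fixMap_w (sG : G ⟶ Spec k) (sU : U ⟶ Spec k) (sX : X ⟶ Spec k)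
    (mU : pullback sG sU ⟶ U) (hmU : mU ≫ sU = pullback.snd sG sU ≫ sU)
    (mX : pullback sG sX ⟶ X) (hmX : mX ≫ sX = pullback.snd sG sX ≫ sX)
    (f : U ⟶ X) (hf : f ≫ sX = sU)
    (heq : prodMap k sG sU sX f hf ≫ mX = mU ≫ f) :
    (fixToProd k sG sU mU hmU ≫ prodMap k sG sU sX f hf) ≫ actionPair k sG sX mX hmX
      = (fixToBase k sG sU mU hmU ≫ f) ≫ pullback.diagonal sX := by
  have h1 : fixToProd k sG sU mU hmU ≫ mU = fixToBase k sG sU mU hmU := by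
    have hc : fixToProd k sG sU mU hmU ≫ actionPair k sG sU mU hmU
        = fixToBase k sG sU mU hmU ≫ pullback.diagonal sU := pullback.condition
    have := congrArg (· ≫ pullback.fst sU sU) hc
    simp only [actionPair, Category.assoc] at this
    erw [pullback.lift_fst, pullback.diagonal_fst, Category.comp_id] at this
    exact this
  have h2 : fixToProd k sG sU mU hmU ≫ pullback.snd sG sU = fixToBase k sG sU mU hmU := by
    have hc : fixToProd k sG sU mU hmU ≫ actionPair k sG sU mU hmU
        = fixToBase k sG sU mU hmU ≫ pullback.diagonal sU := pullback.condition
    have := congrArg (· ≫ pullback.snd sU sU) hc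
    simp only [actionPair, Category.assoc] at this
    erw [pullback.lift_snd, pullback.diagonal_snd, Category.comp_id] at this
    exact this
  apply pullback.hom_ext
  · simp only [Category.assoc, actionPair, pullback.lift_fst, pullback.diagonal_fst,
      Category.comp_id]
    rw [heq, ← Category.assoc, h1]
  · simp only [Category.assoc, actionPair, pullback.lift_snd, pullback.diagonal_snd,
      Category.comp_id]
    rw [show prodMap k sG sU sX f hf ≫ pullback.snd sG sX = pullback.snd sG sU ≫ f from by
      unfold prodMap; erw [pullback.lift_snd]]
    rw [← Category.assoc, h2]

theorem actionPair_fst (sX : X ⟶ Spec k) (sG : G ⟶ Spec k) (m : pullback sG sX ⟶ X)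
    (hm : m ≫ sX = pullback.snd sG sX ≫ sX) :
    actionPair k sG sX m hm ≫ pullback.fst sX sX = m := by
  unfold actionPair; erw [pullback.lift_fst]

theorem actionPair_snd (sX : X ⟶ Spec k) (sG : G ⟶ Spec k) (m : pullback sG sX ⟶ X)
    (hm : m ≫ sX = pullback.snd sG sX ≫ sX) :
    actionPair k sG sX m hm ≫ pullback.snd sX sX = pullback.snd sG sX := by
  unfold actionPair; erw [pullback.lift_snd]

theorem prodMap_fst (sG : G ⟶ Spec k) (sU : U ⟶ Spec k) (sX : X ⟶ Spec k)
    (f : U ⟶ X) (hf : f ≫ sX = sU) :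
    prodMap k sG sU sX f hf ≫ pullback.fst sG sX = pullback.fst sG sU := by
  unfold prodMap; erw [pullback.lift_fst, Category.comp_id]

/-- The induced morphism `Fix_G(f) : Fix_G(U) ⟶ Fix_G(X)`. -/
def fixMap (sG : G ⟶ Spec k) (sU : U ⟶ Spec k) (sX : X ⟶ Spec k)
    (mU : pullback sG sU ⟶ U) (hmU : mU ≫ sU = pullback.snd sG sU ≫ sU)
    (mX : pullback sG sX ⟶ X) (hmX : mX ≫ sX = pullback.snd sG sX ≫ sX)
    (f : U ⟶ X) (hf : f ≫ sX = sU)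
    (heq : prodMap k sG sU sX f hf ≫ mX = mU ≫ f) :
    Fix k sG sU mU hmU ⟶ Fix k sG sX mX hmX :=
  pullback.lift (fixToProd k sG sU mU hmU ≫ prodMap k sG sU sX f hf)
    (fixToBase k sG sU mU hmU ≫ f)
    (fixMap_w k sG sU sX mU hmU mX hmX f hf heq)


/-- If `f : U ⟶ X` is a `G`-equivariant monomorphism of `k`-schemes, then
`Fix_G(f) : Fix_G(U) ⟶ Fix_G(X)` is a monomorphism and the square with horizontal arrows
`Fix_G(f)`, `f` and vertical arrows the canonical projections is cartesian, i.e.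
`Fix_G(U) ≅ Fix_G(X) ×_X U`. -/
theorem statement0 (sG : G ⟶ Spec k) (sU : U ⟶ Spec k) (sX : X ⟶ Spec k)
    (mU : pullback sG sU ⟶ U) (hmU : mU ≫ sU = pullback.snd sG sU ≫ sU)
    (mX : pullback sG sX ⟶ X) (hmX : mX ≫ sX = pullback.snd sG sX ≫ sX)
    (f : U ⟶ X) (hf : f ≫ sX = sU)
    (heq : prodMap k sG sU sX f hf ≫ mX = mU ≫ f)
    [Mono f] :
    Mono (fixMap k sG sU sX mU hmU mX hmX f hf heq) ∧
    IsPullback (fixMap k sG sU sX mU hmU mX hmX f hf heq)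
      (fixToBase k sG sU mU hmU) (fixToBase k sG sX mX hmX) f := by
  have h1U : fixToProd k sG sU mU hmU ≫ mU = fixToBase k sG sU mU hmU := by
    have hc : fixToProd k sG sU mU hmU ≫ actionPair k sG sU mU hmU
        = fixToBase k sG sU mU hmU ≫ pullback.diagonal sU := pullback.condition
    have := congrArg (· ≫ pullback.fst sU sU) hc
    simp only [actionPair, Category.assoc] at this
    erw [pullback.lift_fst, pullback.diagonal_fst, Category.comp_id] at this
    exact this
  have h2U : fixToProd k sG sU mU hmU ≫ pullback.snd sG sU = fixToBase k sG sU mU hmU := by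
    have hc : fixToProd k sG sU mU hmU ≫ actionPair k sG sU mU hmU
        = fixToBase k sG sU mU hmU ≫ pullback.diagonal sU := pullback.condition
    have := congrArg (· ≫ pullback.snd sU sU) hc
    simp only [actionPair, Category.assoc] at this
    erw [pullback.lift_snd, pullback.diagonal_snd, Category.comp_id] at this
    exact this
  have h1X : fixToProd k sG sX mX hmX ≫ mX = fixToBase k sG sX mX hmX := by
    have hc : fixToProd k sG sX mX hmX ≫ actionPair k sG sX mX hmX
        = fixToBase k sG sX mX hmX ≫ pullback.diagonal sX := pullback.condition
    have := congrArg (· ≫ pullback.fst sX sX) hc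
    simp only [actionPair, Category.assoc] at this
    erw [pullback.lift_fst, pullback.diagonal_fst, Category.comp_id] at this
    exact this
  have h2X : fixToProd k sG sX mX hmX ≫ pullback.snd sG sX = fixToBase k sG sX mX hmX := by
    have hc : fixToProd k sG sX mX hmX ≫ actionPair k sG sX mX hmX
        = fixToBase k sG sX mX hmX ≫ pullback.diagonal sX := pullback.condition
    have := congrArg (· ≫ pullback.snd sX sX) hc
    simp only [actionPair, Category.assoc] at this
    erw [pullback.lift_snd, pullback.diagonal_snd, Category.comp_id] at this
    exact this
  have hmapProd : fixMap k sG sU sX mU hmU mX hmX f hf heq ≫ fixToProd k sG sX mX hmX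
      = fixToProd k sG sU mU hmU ≫ prodMap k sG sU sX f hf := by
    exact pullback.lift_fst _ _ _
  have hmapBase : fixMap k sG sU sX mU hmU mX hmX f hf heq ≫ fixToBase k sG sX mX hmX
      = fixToBase k sG sU mU hmU ≫ f := by
    exact pullback.lift_snd _ _ _
  have hw : ∀ (s : PullbackCone (fixToBase k sG sX mX hmX) f),
      (s.fst ≫ fixToProd k sG sX mX hmX ≫ pullback.fst sG sX) ≫ sG = s.snd ≫ sU := by
    intro s
    simp only [Category.assoc, pullback.condition]
    rw [reassoc_of% h2X, ← Category.assoc, s.condition, Category.assoc, hf]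
  have hℓprod : ∀ (s : PullbackCone (fixToBase k sG sX mX hmX) f),
      pullback.lift (s.fst ≫ fixToProd k sG sX mX hmX ≫ pullback.fst sG sX) s.snd (hw s)
        ≫ prodMap k sG sU sX f hf = s.fst ≫ fixToProd k sG sX mX hmX := by
    intro s
    apply pullback.hom_ext
    · rw [Category.assoc]; erw [prodMap_fst]; exact pullback.lift_fst _ _ _
    · simp only [prodMap, Category.assoc, pullback.lift_snd]
      rw [← Category.assoc, pullback.lift_snd, ← s.condition]
      slice_rhs 2 3 => rw [h2X]
  have hmUeq : ∀ (s : PullbackCone (fixToBase k sG sX mX hmX) f),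
      pullback.lift (s.fst ≫ fixToProd k sG sX mX hmX ≫ pullback.fst sG sX) s.snd (hw s)
        ≫ mU = s.snd := by
    intro s
    rw [← cancel_mono f, Category.assoc, ← heq, ← Category.assoc, hℓprod s,
      Category.assoc, h1X, ← s.condition]
  have hwU : ∀ (s : PullbackCone (fixToBase k sG sX mX hmX) f),
      pullback.lift (s.fst ≫ fixToProd k sG sX mX hmX ≫ pullback.fst sG sX) s.snd (hw s)
        ≫ actionPair k sG sU mU hmU = s.snd ≫ pullback.diagonal sU := by
    intro s
    apply pullback.hom_ext
    · simp only [Category.assoc]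
      erw [actionPair_fst k sU sG mU hmU, pullback.diagonal_fst sU, Category.comp_id]; exact hmUeq s
    · simp only [Category.assoc]
      erw [actionPair_snd k sU sG mU hmU, pullback.diagonal_snd sU, Category.comp_id]; exact pullback.lift_snd _ _ _
  have hlim : IsLimit (PullbackCone.mk (fixMap k sG sU sX mU hmU mX hmX f hf heq)
      (fixToBase k sG sU mU hmU) hmapBase) := by
    apply PullbackCone.IsLimit.mk _
      (fun s => pullback.lift (pullback.lift
        (s.fst ≫ fixToProd k sG sX mX hmX ≫ pullback.fst sG sX) s.snd (hw s)) s.snd (hwU s))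
      ?fac1 ?fac2 ?uniq
    case fac1 =>
      intro s
      apply pullback.hom_ext
      · erw [Category.assoc]
        show _ ≫ fixMap k sG sU sX mU hmU mX hmX f hf heq ≫ fixToProd k sG sX mX hmX = _
        rw [hmapProd]
        refine (Category.assoc _ _ _).symm.trans ?_
        erw [show pullback.lift _ s.snd (hwU s) ≫ fixToProd k sG sU mU hmU
            = pullback.lift (s.fst ≫ fixToProd k sG sX mX hmX ≫ pullback.fst sG sX)
              s.snd (hw s) from pullback.lift_fst _ _ _]
        exact hℓprod s
      · erw [Category.assoc]
        show _ ≫ fixMap k sG sU sX mU hmU mX hmX f hf heq ≫ fixToBase k sG sX mX hmX = _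
        rw [hmapBase]
        refine (Category.assoc _ _ _).symm.trans ?_
        erw [show pullback.lift _ s.snd (hwU s) ≫ fixToBase k sG sU mU hmU = s.snd from
          pullback.lift_snd _ _ _]
        exact s.condition.symm
    case fac2 =>
      intro s
      exact pullback.lift_snd _ _ _
    case uniq =>
      intro s m hm1 hm2
      apply pullback.hom_ext
      · show m ≫ fixToProd k sG sU mU hmU = _
        rw [pullback.lift_fst]
        apply pullback.hom_ext
        · simp only [Category.assoc, pullback.lift_fst]
          erw [Category.assoc]
          erw [show fixToProd k sG sU mU hmU ≫ pullback.fst sG sU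
              = fixToProd k sG sU mU hmU ≫ prodMap k sG sU sX f hf ≫ pullback.fst sG sX
              from by erw [prodMap_fst]]
          rw [reassoc_of% hmapProd.symm]; exact (Category.assoc _ _ _).symm.trans (congrArg (· ≫ _) hm1)
        · erw [Category.assoc, h2U, pullback.lift_snd]
          exact hm2
      · show m ≫ fixToBase k sG sU mU hmU = _
        rw [pullback.lift_snd]
        exact hm2
  refine ⟨?_, IsPullback.of_isLimit hlim⟩
  exact PullbackCone.mono_fst_of_is_pullback_of_mono hlim

end Paper
end
end

section
/- Let C be a bounded chain complex of finitely generated free R-modules which is exact (acyclic), and let g : C → C be a chain map. Then the alternating sum of traces vanishes: Σ_i (−1)^i tr(g_i) = 0. -/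
open CategoryTheory CategoryTheory.Limits

private lemma neg_one_pow_sub_one {R : Type} [CommRing R] (j : ℤ) :
    ((-1 : R)) ^ (j - 1).natAbs = -((-1 : R) ^ j.natAbs) := by
  rcases Int.even_or_odd j with he | ho
  · have h1 : Even j.natAbs := Int.natAbs_even.mpr he
    have h2 : Odd (j - 1).natAbs := Int.natAbs_odd.mpr (he.sub_odd odd_one)
    rw [h2.neg_one_pow, h1.neg_one_pow]
  · have h1 : Odd j.natAbs := Int.natAbs_odd.mpr ho
    have h2 : Even (j - 1).natAbs := Int.natAbs_even.mpr (ho.sub_odd odd_one)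
    rw [h2.neg_one_pow, h1.neg_one_pow, neg_neg]

private lemma exists_homotopy {R : Type} [CommRing R] (C : ChainComplex (ModuleCat R) ℤ)
    [∀ i, Module.Free R (C.X i)]
    (N : ℕ) (hbdd : ∀ i : ℤ, (N : ℤ) < |i| → IsZero (C.X i))
    (hexact : ∀ i : ℤ, C.ExactAt i) :
    ∃ h : ∀ i j : ℤ, (C.X i ⟶ C.X j),
      ∀ i : ℤ, C.d i (i - 1) ≫ h (i - 1) i + h i (i + 1) ≫ C.d (i + 1) i = 𝟙 (C.X i) := by
  have hrk : ∀ i : ℤ, LinearMap.range (C.d (i+1) i).hom = LinearMap.ker (C.d i (i-1)).hom := by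
    intro i
    exact ((C.exactAt_iff' (i := i+1) (j := i) (k := i-1) (by simp) (by simp)).mp
      (hexact i)).moduleCat_range_eq_ker
  set a : ℤ := -(N+1 : ℤ) with ha
  have main : ∀ n : ℕ, ∃ h : ∀ i j : ℤ, (C.X i ⟶ C.X j),
      ∀ i : ℤ, i ≤ a + n →
        C.d i (i - 1) ≫ h (i - 1) i + h i (i + 1) ≫ C.d (i + 1) i = 𝟙 (C.X i) := by
    intro n
    induction n with
    | zero =>
      refine ⟨fun _ _ => 0, fun i hi => ?_⟩
      have hz : IsZero (C.X i) := hbdd i (lt_abs.mpr (Or.inr (by omega)))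
      exact hz.eq_of_src _ _
    | succ n ih =>
      obtain ⟨h, hh⟩ := ih
      set i₀ : ℤ := a + n + 1 with hi₀
      have hh' := hh (i₀ - 1) (by omega)
      rw [show i₀ - 1 + 1 = i₀ by ring] at hh'
      set φ : C.X i₀ ⟶ C.X i₀ := 𝟙 (C.X i₀) - C.d i₀ (i₀ - 1) ≫ h (i₀ - 1) i₀ with hφ
      have hφd : φ ≫ C.d i₀ (i₀ - 1) = 0 := by
        have h2 : h (i₀ - 1) i₀ ≫ C.d i₀ (i₀ - 1)
            = 𝟙 (C.X (i₀ - 1)) - C.d (i₀-1) (i₀-1-1) ≫ h (i₀-1-1) (i₀-1) := by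
          rw [← hh']; abel
        rw [hφ, Preadditive.sub_comp, Category.id_comp, Category.assoc, h2,
          Preadditive.comp_sub, Category.comp_id, ← Category.assoc, C.d_comp_d,
          Limits.zero_comp, sub_zero, sub_self]
      have hmem : ∀ x : C.X (i₀+1), ((C.d (i₀+1) i₀).hom : C.X (i₀+1) →ₗ[R] C.X i₀) x ∈
          LinearMap.ker ((C.d i₀ (i₀ - 1)).hom : C.X i₀ →ₗ[R] C.X (i₀ - 1)) := by
        intro x
        rw [← hrk i₀]
        exact LinearMap.mem_range_self _ x
      have hsurj : Function.Surjective
          (LinearMap.codRestrict _ (((C.d (i₀+1) i₀).hom : C.X (i₀+1) →ₗ[R] C.X i₀)) hmem) := by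
        rintro ⟨y, hy⟩
        rw [← hrk i₀] at hy
        obtain ⟨x, hx⟩ := hy
        exact ⟨x, Subtype.ext hx⟩
      have hφmem : ∀ x : C.X i₀, ((φ).hom : C.X i₀ →ₗ[R] C.X i₀) x ∈
          LinearMap.ker ((C.d i₀ (i₀ - 1)).hom : C.X i₀ →ₗ[R] C.X (i₀ - 1)) := by
        intro x
        have := congrArg (fun (f : C.X i₀ ⟶ C.X (i₀-1)) => f.hom x) hφd
        simpa using this
      obtain ⟨ψ, hψ⟩ := Module.projective_lifting_property
        (LinearMap.codRestrict _ (((C.d (i₀+1) i₀).hom : C.X (i₀+1) →ₗ[R] C.X i₀)) hmem)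
        (LinearMap.codRestrict _ ((φ).hom : C.X i₀ →ₗ[R] C.X i₀) hφmem) hsurj
      have hψ' : ((ModuleCat.ofHom ψ : C.X i₀ ⟶ C.X (i₀+1)) ≫ C.d (i₀+1) i₀ : C.X i₀ ⟶ C.X i₀) = φ := by
        ext x
        have hpt := congrArg Subtype.val (LinearMap.congr_fun hψ x)
        simpa using hpt
      refine ⟨Function.update h i₀ (Function.update (h i₀) (i₀+1) (ModuleCat.ofHom ψ)), fun i hi => ?_⟩
      rcases eq_or_lt_of_le (show i ≤ i₀ by push_cast at hi ⊢; omega) with heq | hlt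
      · subst heq
        rw [Function.update_self, Function.update_of_ne (by omega), Function.update_self,
          hψ', hφ]
        abel
      · rw [Function.update_of_ne (by omega), Function.update_of_ne (by omega)]
        exact hh i (by omega)
  obtain ⟨h, hh⟩ := main (2*N+2)
  refine ⟨h, fun i => ?_⟩
  rcases le_or_gt i (a + (2*N+2 : ℕ)) with hle | hgt
  · exact hh i hle
  · have hz : IsZero (C.X i) := hbdd i (lt_abs.mpr (Or.inl (by push_cast at hgt ⊢; omega)))
    exact hz.eq_of_src _ _

/-- If `C` is a bounded chain complex of finitely generated free `R`-modules
which is exact (acyclic), and `g : C ⟶ C` is a chain map, then the alternating sum of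
traces vanishes: `Σᵢ (−1)ⁱ tr(gᵢ) = 0`. (Here `(-1)^i` for `i : ℤ` is written as
`(-1)^i.natAbs`, which agrees with it since `|i|` and `i` have the same parity.) -/
theorem statement6 {R : Type} [CommRing R] (C : ChainComplex (ModuleCat R) ℤ)
    [∀ i, Module.Free R (C.X i)] [∀ i, Module.Finite R (C.X i)]
    (hbdd : ∃ N : ℕ, ∀ i : ℤ, (N : ℤ) < |i| → IsZero (C.X i))
    (hexact : ∀ i : ℤ, C.ExactAt i)
    (g : C ⟶ C) :
    ∑ᶠ i : ℤ, ((-1 : R) ^ i.natAbs) * LinearMap.trace R (C.X i) (g.f i).hom = 0 := by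
  obtain ⟨N, hbdd⟩ := hbdd
  obtain ⟨h, hh⟩ := exists_homotopy C N hbdd hexact
  set s : ℤ → R := fun i => LinearMap.trace R (C.X i)
    (((h (i-1) i).hom : C.X (i-1) →ₗ[R] C.X i) ∘ₗ (((g.f (i-1)).hom : C.X (i-1) →ₗ[R] C.X (i-1))
      ∘ₗ ((C.d i (i-1)).hom : C.X i →ₗ[R] C.X (i-1)))) with hs
  have hsdef : ∀ j : ℤ, s j = LinearMap.trace R (C.X j)
    (((h (j-1) j).hom : C.X (j-1) →ₗ[R] C.X j) ∘ₗ (((g.f (j-1)).hom : C.X (j-1) →ₗ[R] C.X (j-1))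
      ∘ₗ ((C.d j (j-1)).hom : C.X j →ₗ[R] C.X (j-1)))) := fun _ => rfl
  have key : ∀ i : ℤ, LinearMap.trace R (C.X i) (g.f i).hom = s (i+1) + s i := by
    intro i
    have hid : (((h (i-1) i).hom : C.X (i-1) →ₗ[R] C.X i) ∘ₗ ((C.d i (i-1)).hom : _ →ₗ[R] _))
        + (((C.d (i+1) i).hom : C.X (i+1) →ₗ[R] C.X i) ∘ₗ ((h i (i+1)).hom : _ →ₗ[R] _))
        = LinearMap.id := by simpa using congrArg ModuleCat.Hom.hom (hh i)
    have hcomm : ((C.d i (i-1)).hom : C.X i →ₗ[R] C.X (i-1)) ∘ₗ ((g.f i).hom : C.X i →ₗ[R] C.X i)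
        = ((g.f (i-1)).hom : C.X (i-1) →ₗ[R] C.X (i-1)) ∘ₗ ((C.d i (i-1)).hom : _ →ₗ[R] _) :=
      by rw [← ModuleCat.hom_comp, ← ModuleCat.hom_comp, g.comm]
    have T1 : LinearMap.trace R (C.X i) (((g.f i).hom : C.X i →ₗ[R] C.X i) ∘ₗ
        (((h (i-1) i).hom : C.X (i-1) →ₗ[R] C.X i) ∘ₗ ((C.d i (i-1)).hom : _ →ₗ[R] _))) = s i := by
      calc LinearMap.trace R (C.X i) (((g.f i).hom : C.X i →ₗ[R] C.X i) ∘ₗ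
            (((h (i-1) i).hom : C.X (i-1) →ₗ[R] C.X i) ∘ₗ ((C.d i (i-1)).hom : _ →ₗ[R] _)))
          = LinearMap.trace R (C.X i)
            ((((g.f i).hom : C.X i →ₗ[R] C.X i) ∘ₗ ((h (i-1) i).hom : C.X (i-1) →ₗ[R] C.X i))
              ∘ₗ ((C.d i (i-1)).hom : _ →ₗ[R] _)) := by rw [LinearMap.comp_assoc]
        _ = LinearMap.trace R (C.X (i-1)) (((C.d i (i-1)).hom : _ →ₗ[R] _) ∘ₗ
            (((g.f i).hom : C.X i →ₗ[R] C.X i) ∘ₗ ((h (i-1) i).hom : C.X (i-1) →ₗ[R] C.X i))) :=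
            (LinearMap.trace_comp_comm' _ _).symm
        _ = LinearMap.trace R (C.X (i-1))
            ((((g.f (i-1)).hom : C.X (i-1) →ₗ[R] C.X (i-1)) ∘ₗ ((C.d i (i-1)).hom : _ →ₗ[R] _))
              ∘ₗ ((h (i-1) i).hom : C.X (i-1) →ₗ[R] C.X i)) := by
            rw [← LinearMap.comp_assoc, hcomm]
        _ = LinearMap.trace R (C.X i) (((h (i-1) i).hom : C.X (i-1) →ₗ[R] C.X i) ∘ₗ
            (((g.f (i-1)).hom : C.X (i-1) →ₗ[R] C.X (i-1)) ∘ₗ ((C.d i (i-1)).hom : _ →ₗ[R] _))) :=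
            LinearMap.trace_comp_comm' _ _
        _ = s i := (hsdef i).symm
    have T2 : LinearMap.trace R (C.X i) (((g.f i).hom : C.X i →ₗ[R] C.X i) ∘ₗ
        (((C.d (i+1) i).hom : C.X (i+1) →ₗ[R] C.X i) ∘ₗ ((h i (i+1)).hom : _ →ₗ[R] _))) = s (i+1) := by
      calc LinearMap.trace R (C.X i) (((g.f i).hom : C.X i →ₗ[R] C.X i) ∘ₗ
            (((C.d (i+1) i).hom : C.X (i+1) →ₗ[R] C.X i) ∘ₗ ((h i (i+1)).hom : _ →ₗ[R] _)))
          = LinearMap.trace R (C.X i)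
            ((((g.f i).hom : C.X i →ₗ[R] C.X i) ∘ₗ ((C.d (i+1) i).hom : C.X (i+1) →ₗ[R] C.X i))
              ∘ₗ ((h i (i+1)).hom : _ →ₗ[R] _)) := by rw [LinearMap.comp_assoc]
        _ = LinearMap.trace R (C.X (i+1)) (((h i (i+1)).hom : _ →ₗ[R] _) ∘ₗ
            (((g.f i).hom : C.X i →ₗ[R] C.X i) ∘ₗ ((C.d (i+1) i).hom : C.X (i+1) →ₗ[R] C.X i))) :=
            LinearMap.trace_comp_comm' _ _
        _ = s (i+1) := by
            rw [hsdef (i+1), show (i : ℤ) + 1 - 1 = i by ring]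
    have e1 : ((g.f i).hom : C.X i →ₗ[R] C.X i)
        = ((g.f i).hom : C.X i →ₗ[R] C.X i) ∘ₗ
            ((((h (i-1) i).hom : C.X (i-1) →ₗ[R] C.X i) ∘ₗ ((C.d i (i-1)).hom : _ →ₗ[R] _))
            + (((C.d (i+1) i).hom : C.X (i+1) →ₗ[R] C.X i) ∘ₗ ((h i (i+1)).hom : _ →ₗ[R] _))) := by
      rw [hid, LinearMap.comp_id]
    rw [e1, LinearMap.comp_add, map_add, T1, T2, add_comm]
  have hzero : ∀ i : ℤ, (N : ℤ) < |i| → s i = 0 := by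
    intro i hi
    have hz := hbdd i hi
    have hid0 : 𝟙 (C.X i) = (0 : C.X i ⟶ C.X i) := hz.eq_of_src _ _
    have hx0 : ∀ x : C.X i, x = 0 := by
      intro x
      have := congrArg (fun f : C.X i ⟶ C.X i => ((f).hom : C.X i →ₗ[R] C.X i) x) hid0
      simpa using this
    rw [hsdef i]
    have : (((h (i-1) i).hom : C.X (i-1) →ₗ[R] C.X i) ∘ₗ (((g.f (i-1)).hom : _ →ₗ[R] _)
        ∘ₗ ((C.d i (i-1)).hom : C.X i →ₗ[R] C.X (i-1)))) = 0 := by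
      ext x
      simpa using hx0 _
    rw [this, map_zero]
  have hsupp2 : (Function.support fun i : ℤ => ((-1:R)) ^ i.natAbs * s i).Finite := by
    apply Set.Finite.subset (Set.finite_Icc (-(N:ℤ)) N)
    intro i hi
    simp only [Function.mem_support] at hi
    by_contra hmem
    simp only [Set.mem_Icc, not_and_or, not_le] at hmem
    refine hi ?_
    have habs : (N : ℤ) < |i| := by
      rcases hmem with hm | hm
      · exact lt_abs.mpr (Or.inr (by omega))
      · exact lt_abs.mpr (Or.inl (by omega))
    rw [hzero i habs, mul_zero]
  have hsupp1 : (Function.support fun i : ℤ => ((-1:R)) ^ i.natAbs * s (i+1)).Finite := by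
    apply Set.Finite.subset (Set.finite_Icc (-(N:ℤ)-1) (N+1))
    intro i hi
    simp only [Function.mem_support] at hi
    by_contra hmem
    simp only [Set.mem_Icc, not_and_or, not_le] at hmem
    refine hi ?_
    have habs : (N : ℤ) < |i+1| := by
      rcases hmem with hm | hm
      · exact lt_abs.mpr (Or.inr (by omega))
      · exact lt_abs.mpr (Or.inl (by omega))
    rw [hzero _ habs, mul_zero]
  have step1 : ∑ᶠ i : ℤ, ((-1 : R) ^ i.natAbs) * LinearMap.trace R (C.X i) (g.f i).hom
      = (∑ᶠ i : ℤ, ((-1:R)) ^ i.natAbs * s (i+1)) + ∑ᶠ i : ℤ, ((-1:R)) ^ i.natAbs * s i := by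
    rw [← finsum_add_distrib hsupp1 hsupp2]
    exact finsum_congr fun i => by rw [key i, mul_add]
  have step2 : (∑ᶠ i : ℤ, ((-1:R)) ^ i.natAbs * s (i+1))
      = -∑ᶠ i : ℤ, ((-1:R)) ^ i.natAbs * s i := by
    have e2 : ∀ i : ℤ, ((-1:R)) ^ i.natAbs * s (i+1)
        = (fun j : ℤ => ((-1:R)) ^ (j-1).natAbs * s j) ((Equiv.addRight (1:ℤ)) i) := by
      intro i
      simp only [Equiv.coe_addRight]
      rw [show (i : ℤ) + 1 - 1 = i by ring]
    have e3 := finsum_comp_equiv (Equiv.addRight (1:ℤ))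
      (f := fun j : ℤ => ((-1:R)) ^ (j-1).natAbs * s j)
    rw [finsum_congr e2, e3, ← finsum_neg_distrib]
    exact finsum_congr fun j => by rw [neg_one_pow_sub_one, neg_mul]
  rw [step1, step2, neg_add_cancel]
end

section
/- The preimage φ⁻¹(A·1_C) ⊆ B (equivalently, the fiber product B ×_C A formed using φ and the structure map A → C) equals the A-subalgebra of B generated by e₁ = ξ₀ + ξ₁ and e₂ = ξ₀ξ₁; moreover the A-algebra homomorphism A[x]/((x − 2t₁)(x − 2t₂)(x − (t₁ + t₂))) → B sending x to ξ₀ + ξ₁ is well defined and injective with image φ⁻¹(A·1_C). In particular, φ⁻¹(A·1_C) is a free A-module of rank 3. -/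
set_option synthInstance.maxHeartbeats 1000000
set_option maxHeartbeats 1000000

noncomputable section

namespace Paper8

open MvPolynomial in
section

/-- The Laurent polynomial ring `A = k[t₁^{±1}, t₂^{±1}]`, realized as the group algebra
of `ℤ²` over `k`. -/
abbrev A (k : Type) [Field k] : Type := AddMonoidAlgebra k (Fin 2 →₀ ℤ)

variable (k : Type) [Field k]

/-- The Laurent variable `tᵢ₊₁ ∈ A`. -/
def t (i : Fin 2) : A k := AddMonoidAlgebra.single (Finsupp.single i 1) 1

/-- The ideal `((ξ₀ − t₁)(ξ₀ − t₂), (ξ₁ − t₁)(ξ₁ − t₂))` of `A[ξ₀, ξ₁]`. -/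
def bIdeal : Ideal (MvPolynomial (Fin 2) (A k)) :=
  Ideal.span {(X 0 - C (t k 0)) * (X 0 - C (t k 1)),
              (X 1 - C (t k 0)) * (X 1 - C (t k 1))}

/-- `B = A[ξ₀, ξ₁]/((ξ₀ − t₁)(ξ₀ − t₂), (ξ₁ − t₁)(ξ₁ − t₂))`. -/
abbrev B : Type := MvPolynomial (Fin 2) (A k) ⧸ bIdeal k

/-- The class `ξᵢ ∈ B`. -/
def ξ (i : Fin 2) : B k := Ideal.Quotient.mk (bIdeal k) (X i)

/-- The ideal `((ξ − t₁)(ξ − t₂))` of `A[ξ]`. -/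
def cIdeal : Ideal (Polynomial (A k)) :=
  Ideal.span {(Polynomial.X - Polynomial.C (t k 0)) * (Polynomial.X - Polynomial.C (t k 1))}

/-- `C = A[ξ]/((ξ − t₁)(ξ − t₂))`. -/
abbrev Cring : Type := Polynomial (A k) ⧸ cIdeal k

/-- The class `ξ ∈ C`. -/
def ξC : Cring k := Ideal.Quotient.mk (cIdeal k) Polynomial.X

/-- The ideal `((x − 2t₁)(x − 2t₂)(x − (t₁ + t₂)))` of `A[x]`. -/
def qIdeal : Ideal (Polynomial (A k)) :=
  Ideal.span {(Polynomial.X - Polynomial.C (2 * t k 0)) *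
      (Polynomial.X - Polynomial.C (2 * t k 1)) *
      (Polynomial.X - Polynomial.C (t k 0 + t k 1))}

/-- `A[x]/((x − 2t₁)(x − 2t₂)(x − (t₁ + t₂)))`. -/
abbrev Q : Type := Polynomial (A k) ⧸ qIdeal k

end

section Aux
variable (k : Type) [Field k]

lemma tsub_ne : t k 0 - t k 1 ≠ 0 := by
  intro h
  have h2 : t k 0 = t k 1 := sub_eq_zero.1 h
  have hne : Finsupp.single (0 : Fin 2) (1:ℤ) ≠ Finsupp.single (1 : Fin 2) (1:ℤ) := by
    intro hs
    have := congrArg (fun f => f (0 : Fin 2)) hs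
    simp [Finsupp.single_apply] at this
  rw [t, t] at h2
  rcases AddMonoidAlgebra.single_inj.1 h2 with ⟨hs, -⟩ | ⟨hs, -⟩
  · exact hne hs
  · exact one_ne_zero hs

lemma two_unit (hk : (2 : k) ≠ 0) : IsUnit (2 : A k) := by
  have h : (2 : A k) = algebraMap k (A k) 2 := by
    rw [map_ofNat]
  rw [h]
  exact (isUnit_iff_ne_zero.2 hk).map (algebraMap k (A k))

lemma relB0 : (ξ k 0 - algebraMap (A k) (B k) (t k 0)) * (ξ k 0 - algebraMap (A k) (B k) (t k 1)) = 0 := by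
  have : ∀ x : A k, algebraMap (A k) (B k) x = Ideal.Quotient.mk (bIdeal k) (MvPolynomial.C x) := fun _ => rfl
  rw [this, this, ξ, ← map_sub, ← map_sub, ← map_mul, Ideal.Quotient.eq_zero_iff_mem]
  exact Ideal.subset_span (by left; rfl)

lemma relB1 : (ξ k 1 - algebraMap (A k) (B k) (t k 0)) * (ξ k 1 - algebraMap (A k) (B k) (t k 1)) = 0 := by
  have : ∀ x : A k, algebraMap (A k) (B k) x = Ideal.Quotient.mk (bIdeal k) (MvPolynomial.C x) := fun _ => rfl
  rw [this, this, ξ, ← map_sub, ← map_sub, ← map_mul, Ideal.Quotient.eq_zero_iff_mem]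
  exact Ideal.subset_span (by right; rfl)

lemma relC : (ξC k - @algebraMap (A k) (Cring k) _ inferInstance _ (t k 0)) * (ξC k - @algebraMap (A k) (Cring k) _ inferInstance _ (t k 1)) = 0 := by
  have : ∀ x : A k, @algebraMap (A k) (Cring k) _ inferInstance _ x = Ideal.Quotient.mk (cIdeal k) (Polynomial.C x) := fun _ => rfl
  rw [this, this, ξC, ← map_sub, ← map_sub, ← map_mul, Ideal.Quotient.eq_zero_iff_mem]
  exact Ideal.subset_span rfl

/-- evaluation `B → A` at `ξ₀ ↦ u, ξ₁ ↦ v` for roots `u v` of the quadratic. -/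
def evB (u v : A k) (hu : (u - t k 0) * (u - t k 1) = 0)
    (hv : (v - t k 0) * (v - t k 1) = 0) : B k →ₐ[A k] A k :=
  Ideal.Quotient.liftₐ (bIdeal k)
    (MvPolynomial.aeval (fun i : Fin 2 => if i = 0 then u else v))
    (by
      intro a ha
      have hle : bIdeal k ≤ RingHom.ker (MvPolynomial.aeval
          (fun i : Fin 2 => if i = 0 then u else v) : _ →ₐ[A k] A k).toRingHom := by
        rw [bIdeal, Ideal.span_le]
        rintro p hp
        simp only [Set.mem_insert_iff, Set.mem_singleton_iff] at hp
        rcases hp with rfl | rfl <;>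
          simp [RingHom.mem_ker, hu, hv]
      exact hle ha)

lemma evB_ξ0 (u v : A k) (hu) (hv) : evB k u v hu hv (ξ k 0) = u := by
  show MvPolynomial.aeval (fun i : Fin 2 => if i = 0 then u else v) (MvPolynomial.X 0) = u
  simp

lemma evB_ξ1 (u v : A k) (hu) (hv) : evB k u v hu hv (ξ k 1) = v := by
  show MvPolynomial.aeval (fun i : Fin 2 => if i = 0 then u else v) (MvPolynomial.X 1) = v
  simp

lemma root_t0 : (t k 0 - t k 0) * (t k 0 - t k 1) = 0 := by rw [sub_self, zero_mul]
lemma root_t1 : (t k 1 - t k 0) * (t k 1 - t k 1) = 0 := by rw [sub_self, mul_zero]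

lemma indepB (a b c d : A k)
    (h : algebraMap (A k) (B k) a + algebraMap (A k) (B k) b * ξ k 0
      + algebraMap (A k) (B k) c * ξ k 1
      + algebraMap (A k) (B k) d * (ξ k 0 * ξ k 1) = 0) :
    a = 0 ∧ b = 0 ∧ c = 0 ∧ d = 0 := by
  have hts := tsub_ne k
  have ev := fun (u v : A k) hu hv => congrArg (evB k u v hu hv) h
  have h00 := ev _ _ (root_t0 k) (root_t0 k)
  have h01 := ev _ _ (root_t0 k) (root_t1 k)
  have h10 := ev _ _ (root_t1 k) (root_t0 k)
  have h11 := ev _ _ (root_t1 k) (root_t1 k)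
  simp only [map_add, map_mul, AlgHom.commutes, evB_ξ0, evB_ξ1, map_zero,
    Algebra.algebraMap_self, RingHom.id_apply] at h00 h01 h10 h11
  have hb0 : (b + d * t k 0) * (t k 0 - t k 1) = 0 := by linear_combination h00 - h10
  have hb1 : (b + d * t k 1) * (t k 0 - t k 1) = 0 := by linear_combination h01 - h11
  have hc0 : (c + d * t k 0) * (t k 0 - t k 1) = 0 := by linear_combination h00 - h01
  have eb0 : b + d * t k 0 = 0 := by
    rcases mul_eq_zero.1 hb0 with h' | h'
    · exact h'
    · exact absurd h' hts
  have eb1 : b + d * t k 1 = 0 := by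
    rcases mul_eq_zero.1 hb1 with h' | h'
    · exact h'
    · exact absurd h' hts
  have hd : d * (t k 0 - t k 1) = 0 := by linear_combination eb0 - eb1
  have hd0 : d = 0 := by
    rcases mul_eq_zero.1 hd with h' | h'
    · exact h'
    · exact absurd h' hts
  have hb : b = 0 := by linear_combination eb0 - t k 0 * hd0
  have hc : c = 0 := by
    have : c + d * t k 0 = 0 := by
      rcases mul_eq_zero.1 hc0 with h' | h'
      · exact h'
      · exact absurd h' hts
    linear_combination this - t k 0 * hd0
  refine ⟨?_, hb, hc, hd0⟩
  linear_combination h00 - t k 0 * hb - t k 0 * hc - (t k 0 * t k 0) * hd0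

/-- evaluation `C → A` at `ξ ↦ u`. -/
def evC (u : A k) (hu : (u - t k 0) * (u - t k 1) = 0) : Cring k →ₐ[A k] A k :=
  Ideal.Quotient.liftₐ (cIdeal k) (Polynomial.aeval u)
    (by
      intro a ha
      have hle : cIdeal k ≤ RingHom.ker (Polynomial.aeval u : _ →ₐ[A k] A k).toRingHom := by
        rw [cIdeal, Ideal.span_le]
        rintro p hp
        simp only [Set.mem_singleton_iff] at hp
        subst hp
        simp [RingHom.mem_ker, hu]
      exact hle ha)

lemma evC_ξ (u : A k) (hu) : evC k u hu (ξC k) = u := by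
  show Polynomial.aeval u (Polynomial.X : Polynomial (A k)) = u
  simp

lemma indepC (a b : A k)
    (h : @algebraMap (A k) (Cring k) _ inferInstance _ a + @algebraMap (A k) (Cring k) _ inferInstance _ b * ξC k = 0) :
    a = 0 ∧ b = 0 := by
  have hts := tsub_ne k
  have h0 := congrArg (evC k _ (root_t0 k)) h
  have h1 := congrArg (evC k _ (root_t1 k)) h
  simp only [map_add, map_mul, AlgHom.commutes, evC_ξ, map_zero,
    Algebra.algebraMap_self, RingHom.id_apply] at h0 h1
  have hb : b * (t k 0 - t k 1) = 0 := by linear_combination h0 - h1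
  have hb0 : b = 0 := by
    rcases mul_eq_zero.1 hb with h' | h'
    · exact h'
    · exact absurd h' hts
  refine ⟨?_, hb0⟩
  linear_combination h0 - t k 0 * hb0

lemma adjoin_xi : Algebra.adjoin (A k) {ξ k 0, ξ k 1} = ⊤ := by
  rw [eq_top_iff]
  rintro x -
  obtain ⟨P, rfl⟩ := Ideal.Quotient.mkₐ_surjective (A k) (I := bIdeal k) x
  have hP : P ∈ Algebra.adjoin (A k) (Set.range MvPolynomial.X) := by
    rw [MvPolynomial.adjoin_range_X]; trivial
  have hmem : Ideal.Quotient.mkₐ (A k) (bIdeal k) P ∈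
      Subalgebra.map (Ideal.Quotient.mkₐ (A k) (bIdeal k))
        (Algebra.adjoin (A k) (Set.range MvPolynomial.X)) :=
    Subalgebra.mem_map.2 ⟨P, hP, rfl⟩
  rw [AlgHom.map_adjoin] at hmem
  refine Algebra.adjoin_mono ?_ hmem
  rintro y ⟨z, ⟨i, rfl⟩, rfl⟩
  fin_cases i
  · left; rfl
  · right; rfl

lemma spanB (x : B k) : ∃ a b c d : A k,
    x = algebraMap (A k) (B k) a + algebraMap (A k) (B k) b * ξ k 0
      + algebraMap (A k) (B k) c * ξ k 1
      + algebraMap (A k) (B k) d * (ξ k 0 * ξ k 1) := by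
  have hx : x ∈ Algebra.adjoin (A k) {ξ k 0, ξ k 1} := by rw [adjoin_xi]; trivial
  refine Algebra.adjoin_induction
    (p := fun y _ => ∃ a b c d : A k,
      y = algebraMap (A k) (B k) a + algebraMap (A k) (B k) b * ξ k 0
        + algebraMap (A k) (B k) c * ξ k 1
        + algebraMap (A k) (B k) d * (ξ k 0 * ξ k 1)) ?_ ?_ ?_ ?_ hx
  · rintro y hy
    simp only [Set.mem_insert_iff, Set.mem_singleton_iff] at hy
    rcases hy with rfl | rfl
    · exact ⟨0, 1, 0, 0, by simp only [map_zero, map_one]; ring⟩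
    · exact ⟨0, 0, 1, 0, by simp only [map_zero, map_one]; ring⟩
  · intro r
    exact ⟨r, 0, 0, 0, by simp only [map_zero]; ring⟩
  · rintro y z - - ⟨a, b, c, d, hy⟩ ⟨a2, b2, c2, d2, hz⟩
    exact ⟨a + a2, b + b2, c + c2, d + d2, by
      simp only [map_add]; linear_combination hy + hz⟩
  · rintro y z - - ⟨a, b, c, d, hy⟩ ⟨a2, b2, c2, d2, hz⟩
    refine ⟨a * a2 - t k 0 * t k 1 * (b * b2 + c * c2) + (t k 0 * t k 1) * (t k 0 * t k 1) * (d * d2),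
      b * a2 + a * b2 + (t k 0 + t k 1) * (b * b2) - t k 0 * t k 1 * (d * c2 + c * d2)
        - t k 0 * t k 1 * (t k 0 + t k 1) * (d * d2),
      c * a2 + a * c2 + (t k 0 + t k 1) * (c * c2) - t k 0 * t k 1 * (d * b2 + b * d2)
        - t k 0 * t k 1 * (t k 0 + t k 1) * (d * d2),
      d * a2 + c * b2 + b * c2 + a * d2
        + (t k 0 + t k 1) * (d * b2 + d * c2 + b * d2 + c * d2)
        + (t k 0 + t k 1) * (t k 0 + t k 1) * (d * d2), ?_⟩
    simp only [map_add, map_mul, map_sub]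
    linear_combination z * hy
      + (algebraMap (A k) (B k) a + algebraMap (A k) (B k) b * ξ k 0
        + algebraMap (A k) (B k) c * ξ k 1
        + algebraMap (A k) (B k) d * (ξ k 0 * ξ k 1)) * hz
      + (algebraMap (A k) (B k) b * algebraMap (A k) (B k) b2
        + ξ k 1 * (algebraMap (A k) (B k) d * algebraMap (A k) (B k) b2
          + algebraMap (A k) (B k) b * algebraMap (A k) (B k) d2)
        + ξ k 1 * ξ k 1 * (algebraMap (A k) (B k) d * algebraMap (A k) (B k) d2)) * relB0 k
      + (algebraMap (A k) (B k) c * algebraMap (A k) (B k) c2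
        - algebraMap (A k) (B k) (t k 0) * algebraMap (A k) (B k) (t k 1)
          * algebraMap (A k) (B k) d * algebraMap (A k) (B k) d2
        + ξ k 0 * (algebraMap (A k) (B k) d * algebraMap (A k) (B k) c2
          + algebraMap (A k) (B k) c * algebraMap (A k) (B k) d2)
        + ξ k 0 * (algebraMap (A k) (B k) (t k 0) + algebraMap (A k) (B k) (t k 1))
          * (algebraMap (A k) (B k) d * algebraMap (A k) (B k) d2)) * relB1 k

end Aux

/-- Let `φ : B → C` be the `A`-algebra homomorphism with `φ(ξ₀) = ξ` and
`φ(ξ₁) = t₁ + t₂ − ξ`.  Then `φ⁻¹(A·1_C) ⊆ B` equals the `A`-subalgebra generated by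
`e₁ = ξ₀ + ξ₁` and `e₂ = ξ₀ξ₁`; the `A`-algebra homomorphism
`A[x]/((x − 2t₁)(x − 2t₂)(x − (t₁ + t₂))) → B` sending `x` to `ξ₀ + ξ₁` is well defined
and injective with image `φ⁻¹(A·1_C)`; in particular, `φ⁻¹(A·1_C)` is a free `A`-module of
rank `3`. -/
theorem statement8 (k : Type) [Field k] (hk : (2 : k) ≠ 0)
    (φ : B k →ₐ[A k] Cring k)
    (hφ0 : φ (ξ k 0) = ξC k)
    (hφ1 : φ (ξ k 1) = @algebraMap (A k) (Cring k) _ inferInstance _ (t k 0 + t k 1) - ξC k) :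
    Subalgebra.comap φ ⊥ = Algebra.adjoin (A k) {ξ k 0 + ξ k 1, ξ k 0 * ξ k 1} ∧
    (∃ ψ : Q k →ₐ[A k] B k,
        ψ (Ideal.Quotient.mk (qIdeal k) Polynomial.X) = ξ k 0 + ξ k 1 ∧
        Function.Injective ψ ∧
        ψ.range = Subalgebra.comap φ ⊥) ∧
    Nonempty (Module.Basis (Fin 3) (A k) (Subalgebra.comap φ ⊥)) := by
  -- notation
  have hφe1 : φ (ξ k 0 + ξ k 1) = @algebraMap (A k) (Cring k) _ inferInstance _ (t k 0 + t k 1) := by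
    rw [map_add, hφ0, hφ1]; ring
  have hφe2 : φ (ξ k 0 * ξ k 1) = @algebraMap (A k) (Cring k) _ inferInstance _ (t k 0 * t k 1) := by
    rw [map_mul, hφ0, hφ1]
    simp only [map_add, map_mul]
    linear_combination (-1 : Cring k) * relC k
  have he1mem : ξ k 0 + ξ k 1 ∈ Subalgebra.comap φ ⊥ := by
    rw [Subalgebra.mem_comap, hφe1]
    exact Algebra.mem_bot.2 ⟨_, rfl⟩
  have he2mem : ξ k 0 * ξ k 1 ∈ Subalgebra.comap φ ⊥ := by
    rw [Subalgebra.mem_comap, hφe2]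
    exact Algebra.mem_bot.2 ⟨_, rfl⟩
  -- the decomposition of elements of the preimage
  have dec : ∀ x : B k, x ∈ Subalgebra.comap φ ⊥ → ∃ a b d : A k,
      x = algebraMap (A k) (B k) a
        + algebraMap (A k) (B k) b * (ξ k 0 + ξ k 1)
        + algebraMap (A k) (B k) d * (ξ k 0 * ξ k 1) := by
    intro x hx
    obtain ⟨a, b, c, d, hxd⟩ := spanB k x
    have hφx : φ x = @algebraMap (A k) (Cring k) _ inferInstance _ a
        + @algebraMap (A k) (Cring k) _ inferInstance _ c * @algebraMap (A k) (Cring k) _ inferInstance _ (t k 0)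
        + @algebraMap (A k) (Cring k) _ inferInstance _ c * @algebraMap (A k) (Cring k) _ inferInstance _ (t k 1)
        + @algebraMap (A k) (Cring k) _ inferInstance _ d * (@algebraMap (A k) (Cring k) _ inferInstance _ (t k 0)
          * @algebraMap (A k) (Cring k) _ inferInstance _ (t k 1))
        + (@algebraMap (A k) (Cring k) _ inferInstance _ b - @algebraMap (A k) (Cring k) _ inferInstance _ c) * ξC k := by
      have h1 := congrArg φ hxd
      simp only [map_add, map_mul, AlgHom.commutes, hφ0, hφ1] at h1
      linear_combination h1 - @algebraMap (A k) (Cring k) _ inferInstance _ d * relC k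
    obtain ⟨r, hr⟩ := Algebra.mem_bot.1 ((Subalgebra.mem_comap _ _ _).1 hx)
    have h0 : @algebraMap (A k) (Cring k) _ inferInstance _ (a + c * (t k 0 + t k 1) + d * (t k 0 * t k 1) - r)
        + @algebraMap (A k) (Cring k) _ inferInstance _ (b - c) * ξC k = 0 := by
      simp only [map_add, map_mul, map_sub]
      linear_combination -hφx - hr
    obtain ⟨-, h2⟩ := indepC k _ _ h0
    have hcb : c = b := by linear_combination -h2
    rw [hcb] at hxd
    exact ⟨a, b, d, by linear_combination hxd⟩
  -- part 1
  have part1 : Subalgebra.comap φ ⊥ = Algebra.adjoin (A k) {ξ k 0 + ξ k 1, ξ k 0 * ξ k 1} := by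
    apply le_antisymm
    · intro x hx
      obtain ⟨a, b, d, hd⟩ := dec x hx
      rw [hd]
      refine add_mem (add_mem (Subalgebra.algebraMap_mem _ a) (mul_mem
        (Subalgebra.algebraMap_mem _ b) (Algebra.subset_adjoin ?_)))
        (mul_mem (Subalgebra.algebraMap_mem _ d) (Algebra.subset_adjoin ?_))
      · left; rfl
      · right; rfl
    · refine Algebra.adjoin_le ?_
      rintro y hy
      rcases hy with rfl | rfl
      · exact he1mem
      · exact he2mem
  refine ⟨part1, ?_⟩
  -- the cubic
  set cub : Polynomial (A k) := (Polynomial.X - Polynomial.C (2 * t k 0)) *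
      (Polynomial.X - Polynomial.C (2 * t k 1)) *
      (Polynomial.X - Polynomial.C (t k 0 + t k 1)) with hcub
  have hmonic : cub.Monic :=
    ((Polynomial.monic_X_sub_C _).mul (Polynomial.monic_X_sub_C _)).mul
      (Polynomial.monic_X_sub_C _)
  have hdeg : cub.degree = 3 := by
    rw [hcub]
    compute_degree!
  have hq : qIdeal k = Ideal.span {cub} := rfl
  have hcube : (ξ k 0 + ξ k 1 - 2 * algebraMap (A k) (B k) (t k 0))
      * (ξ k 0 + ξ k 1 - 2 * algebraMap (A k) (B k) (t k 1))
      * (ξ k 0 + ξ k 1 - (algebraMap (A k) (B k) (t k 0) + algebraMap (A k) (B k) (t k 1))) = 0 := by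
    linear_combination (ξ k 0 + 3 * ξ k 1 - 2 * algebraMap (A k) (B k) (t k 0)
        - 2 * algebraMap (A k) (B k) (t k 1)) * relB0 k
      + (3 * ξ k 0 + ξ k 1 - 2 * algebraMap (A k) (B k) (t k 0)
        - 2 * algebraMap (A k) (B k) (t k 1)) * relB1 k
  have hvanish : ∀ a ∈ qIdeal k, (Polynomial.aeval (ξ k 0 + ξ k 1) : Polynomial (A k) →ₐ[A k] B k) a = 0 := by
    intro a ha
    have hle : qIdeal k ≤ RingHom.ker (Polynomial.aeval (ξ k 0 + ξ k 1) :
        Polynomial (A k) →ₐ[A k] B k).toRingHom := by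
      rw [hq, Ideal.span_le]
      rintro p hp
      simp only [Set.mem_singleton_iff] at hp
      subst hp
      rw [hcub]
      simp only [SetLike.mem_coe, RingHom.mem_ker, AlgHom.toRingHom_eq_coe,
        RingHom.coe_coe, map_mul, map_sub, map_add, map_ofNat, Polynomial.aeval_X,
        Polynomial.aeval_C]
      exact hcube
    exact hle ha
  set ψ : Q k →ₐ[A k] B k :=
    Ideal.Quotient.liftₐ (qIdeal k) (Polynomial.aeval (ξ k 0 + ξ k 1)) hvanish with hψ
  have hψval : ∀ f : Polynomial (A k),
      ψ (Ideal.Quotient.mk (qIdeal k) f) = Polynomial.aeval (ξ k 0 + ξ k 1) f := by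
    intro f
    rw [hψ]
    rfl
  -- injectivity
  have hinj : Function.Injective ψ := by
    rw [injective_iff_map_eq_zero]
    intro z hz
    obtain ⟨f, rfl⟩ := Ideal.Quotient.mk_surjective z
    set g : Polynomial (A k) := f %ₘ cub with hgdef
    have hfg : Ideal.Quotient.mk (qIdeal k) f = Ideal.Quotient.mk (qIdeal k) g := by
      rw [Ideal.Quotient.mk_eq_mk_iff_sub_mem, hq, Ideal.mem_span_singleton]
      exact ⟨f /ₘ cub, by linear_combination -(Polynomial.modByMonic_add_div f cub)⟩
    have hψg : Polynomial.aeval (ξ k 0 + ξ k 1) g = 0 := by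
      rw [← hψval, ← hfg]
      exact hz
    have hdg : g.degree < 3 := hdeg ▸ Polynomial.degree_modByMonic_lt f hmonic
    have hg3 : g = Polynomial.C (g.coeff 0) + Polynomial.C (g.coeff 1) * Polynomial.X
        + Polynomial.C (g.coeff 2) * Polynomial.X ^ 2 := by
      ext n
      rcases n with _ | _ | _ | n
      · simp
      · simp
      · simp
      · have h1 : g.coeff (n + 3) = 0 :=
          Polynomial.coeff_eq_zero_of_degree_lt (lt_of_lt_of_le hdg (by exact_mod_cast Nat.le_add_left 3 n))
        simp [h1, Polynomial.coeff_X_pow, Polynomial.coeff_C]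
    rw [hg3] at hψg
    simp only [map_add, map_mul, map_pow, Polynomial.aeval_C, Polynomial.aeval_X] at hψg
    have hkey : algebraMap (A k) (B k) (g.coeff 0 - 2 * (t k 0 * t k 1) * g.coeff 2)
        + algebraMap (A k) (B k) (g.coeff 1 + (t k 0 + t k 1) * g.coeff 2) * ξ k 0
        + algebraMap (A k) (B k) (g.coeff 1 + (t k 0 + t k 1) * g.coeff 2) * ξ k 1
        + algebraMap (A k) (B k) (2 * g.coeff 2) * (ξ k 0 * ξ k 1) = 0 := by
      simp only [map_add, map_mul, map_sub, map_ofNat]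
      linear_combination hψg - algebraMap (A k) (B k) (g.coeff 2) * relB0 k
        - algebraMap (A k) (B k) (g.coeff 2) * relB1 k
    obtain ⟨h0, h1, -, h3⟩ := indepB k _ _ _ _ hkey
    have hc2 : g.coeff 2 = 0 := ((two_unit k hk).mul_right_eq_zero).1 h3
    have hc1 : g.coeff 1 = 0 := by linear_combination h1 - (t k 0 + t k 1) * hc2
    have hc0 : g.coeff 0 = 0 := by linear_combination h0 + 2 * (t k 0 * t k 1) * hc2
    have hg0 : g = 0 := by rw [hg3, hc0, hc1, hc2]; simp
    exact hfg.trans (by rw [hg0]; exact map_zero _)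
  -- range
  have hrange : ψ.range = Subalgebra.comap φ ⊥ := by
    apply le_antisymm
    · rintro y ⟨z, rfl⟩
      obtain ⟨f, rfl⟩ := Ideal.Quotient.mk_surjective z
      show ψ (Ideal.Quotient.mk (qIdeal k) f) ∈ Subalgebra.comap φ ⊥
      rw [hψval]
      have hmem : Polynomial.aeval (ξ k 0 + ξ k 1) f ∈ Algebra.adjoin (A k) {ξ k 0 + ξ k 1} := by
        rw [Algebra.adjoin_singleton_eq_range_aeval]
        exact ⟨f, rfl⟩
      refine Algebra.adjoin_le ?_ hmem
      rintro y hy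
      rcases hy with rfl
      exact he1mem
    · intro y hy
      obtain ⟨a, b, d, hd⟩ := dec y hy
      obtain ⟨u, hu⟩ := two_unit k hk
      have hi : 2 * (↑u⁻¹ : A k) = 1 := by rw [← hu]; exact u.mul_inv
      have hiB : (2 : B k) * algebraMap (A k) (B k) (↑u⁻¹ : A k) = 1 := by
        have h2 := congrArg (algebraMap (A k) (B k)) hi
        rw [map_mul, map_ofNat, map_one] at h2
        exact h2
      refine ⟨Ideal.Quotient.mk (qIdeal k) (Polynomial.C a + Polynomial.C b * Polynomial.X
        + Polynomial.C (d * (↑u⁻¹ : A k)) * (Polynomial.X * Polynomial.X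
          - Polynomial.C (t k 0 + t k 1) * Polynomial.X
          + Polynomial.C (2 * (t k 0 * t k 1)))), (hψval _).trans ?_⟩
      simp only [map_add, map_mul, map_sub, map_ofNat, Polynomial.aeval_C, Polynomial.aeval_X]
      linear_combination -hd
        + algebraMap (A k) (B k) d * algebraMap (A k) (B k) (↑u⁻¹ : A k) * relB0 k
        + algebraMap (A k) (B k) d * algebraMap (A k) (B k) (↑u⁻¹ : A k) * relB1 k
        + algebraMap (A k) (B k) d * (ξ k 0 * ξ k 1) * hiB
  refine ⟨⟨ψ, ?_, hinj, hrange⟩, ?_⟩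
  · exact (hψval Polynomial.X).trans (Polynomial.aeval_X _)
  -- basis
  · have hnat : cub.natDegree = 3 := Polynomial.natDegree_eq_of_degree_eq_some hdeg
    have hdim : (AdjoinRoot.powerBasis' hmonic).dim = 3 := by
      rw [AdjoinRoot.powerBasis'_dim, hnat]
    have bQ : Module.Basis (Fin 3) (A k) (Q k) := by
      exact (AdjoinRoot.powerBasis' hmonic).basis.reindex (finCongr hdim)
    exact ⟨bQ.map ((AlgEquiv.ofInjective ψ hinj).trans
      (Subalgebra.equivOfEq _ _ hrange)).toLinearEquiv⟩

end Paper8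
end
end
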